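/- Let F be a continuous cumulative distribution function and let (ζ̂_t)_{t≤T} and (ζ_t)_{t≤T} be random variables with ζ_t i.i.d. with cdf F and max_t |ζ̂_t − ζ_t| → 0 in probability as T → ∞. Let F̂ and F̃ be the empirical cdfs of (ζ_t) and (ζ̂_t) respectively. Then sup_z |F̂(z) − F̃(z)| → 0 in probability as T → ∞. -/

import Mathlib

open MeasureTheory Finset Filter


private lemma aux_grid {G H : ℝ → ℝ} (hGmono : Monotone G) (hHmono : Monotone H)
    (hG0 : ∀ z, 0 ≤ G z) (hG1 : ∀ z, G z ≤ 1) (hH0 : ∀ z, 0 ≤ H z) (hH1 : ∀ z, H z ≤ 1)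
    {a b η c d : ℝ} (hab : a < b) (hc : 0 ≤ c)
    (hGa : G a ≤ η) (hGb : 1 - G b ≤ η)
    (huc : ∀ x ∈ Set.Icc a b, ∀ y ∈ Set.Icc a b, |x - y| ≤ d → |G x - G y| ≤ η)
    {N : ℕ} (hN : 0 < N) (hh : (b - a) / N ≤ d)
    (hgrid : ∀ k ≤ N, |H (a + k * ((b - a) / N)) - G (a + k * ((b - a) / N))| ≤ c) :
    ∀ z, |H z - G z| ≤ c + η := by
  intro z
  set h := (b - a) / N with hh_def
  have hNpos : (0:ℝ) < N := by exact_mod_cast hN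
  have hhpos : 0 < h := div_pos (by linarith) hNpos
  have hxN : a + (N:ℝ) * h = b := by rw [hh_def, mul_div_cancel₀ _ hNpos.ne']; ring
  have hη : 0 ≤ η := le_trans (hG0 a) hGa
  have hga := hgrid 0 (Nat.zero_le N)
  simp only [Nat.cast_zero, zero_mul, add_zero] at hga
  have hgb := hgrid N le_rfl
  rw [hxN] at hgb
  rcases lt_or_ge z a with hza | hza
  · have h1 : H z ≤ H a := hHmono hza.le
    have h2 : G z ≤ G a := hGmono hza.le
    have h3 := abs_le.1 hga
    have := hG0 z; have := hH0 z
    rw [abs_le]; constructor <;> linarith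
  rcases lt_or_ge b z with hbz | hbz
  · have h1 : H b ≤ H z := hHmono hbz.le
    have h2 : G b ≤ G z := hGmono hbz.le
    have h3 := abs_le.1 hgb
    have := hH1 z; have := hG1 z
    rw [abs_le]; constructor <;> linarith
  · -- a ≤ z ≤ b
    set k : ℕ := min (⌊(z - a) / h⌋.toNat) (N - 1) with hk_def
    have hkN1 : k ≤ N - 1 := min_le_right _ _
    have hk1N : k + 1 ≤ N := by omega
    have hr0 : 0 ≤ (z - a) / h := div_nonneg (by linarith) hhpos.le
    have hflz : ((⌊(z - a) / h⌋.toNat : ℤ)) = ⌊(z - a) / h⌋ :=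
      Int.toNat_of_nonneg (Int.floor_nonneg.2 hr0)
    have hfl : ((⌊(z - a) / h⌋.toNat : ℝ)) ≤ (z - a) / h := by
      have := Int.floor_le ((z - a) / h)
      rw [← hflz] at this; exact_mod_cast this
    have hklb : (k:ℝ) ≤ (z - a) / h :=
      le_trans (by exact_mod_cast Nat.cast_le.2 (min_le_left _ _)) hfl
    have hxkz : a + (k:ℝ) * h ≤ z := by
      have := (le_div_iff₀ hhpos).1 hklb; linarith
    have hk1cast : ((k:ℝ) + 1) * h = (k:ℝ) * h + h := by ring
    have hzxk1 : z ≤ a + ((k:ℝ) + 1) * h := by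
      rcases le_or_gt (⌊(z - a) / h⌋.toNat) (N - 1) with hcase | hcase
      · have hkk : k = ⌊(z - a) / h⌋.toNat := by omega
        have h2 : (z - a) / h < (⌊(z - a) / h⌋.toNat : ℝ) + 1 := by
          have := Int.lt_floor_add_one ((z - a) / h)
          rw [← hflz] at this; exact_mod_cast this
        rw [hkk]
        have := (div_lt_iff₀ hhpos).1 h2
        linarith
      · have hkk : k = N - 1 := by omega
        have : (k:ℝ) + 1 = (N:ℝ) := by
          rw [hkk]; push_cast [Nat.cast_sub hN]; ring
        rw [this, hxN]; exact hbz
    have hkh0 : 0 ≤ (k:ℝ) * h := by positivity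
    have hk1h : ((k:ℝ) + 1) * h ≤ (N:ℝ) * h := by
      have : ((k:ℝ) + 1) ≤ (N:ℝ) := by exact_mod_cast hk1N
      exact mul_le_mul_of_nonneg_right this hhpos.le
    have hmem1 : a + (k:ℝ) * h ∈ Set.Icc a b :=
      ⟨by linarith, by linarith⟩
    have hmem2 : a + ((k:ℝ) + 1) * h ∈ Set.Icc a b :=
      ⟨by linarith, by linarith⟩
    have hGdiff : |G (a + ((k:ℝ) + 1) * h) - G (a + (k:ℝ) * h)| ≤ η := by
      apply huc _ hmem2 _ hmem1
      rw [show (a + ((k:ℝ) + 1) * h) - (a + (k:ℝ) * h) = h from by ring,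
        abs_of_nonneg hhpos.le]
      exact hh
    have hgk := abs_le.1 (hgrid k (by omega))
    have hgk1 := hgrid (k + 1) hk1N
    push_cast at hgk1
    replace hgk1 := abs_le.1 hgk1
    have hGd := abs_le.1 hGdiff
    have hHzk : H (a + (k:ℝ) * h) ≤ H z := hHmono hxkz
    have hHzk1 : H z ≤ H (a + ((k:ℝ) + 1) * h) := hHmono hzxk1
    have hGzk : G (a + (k:ℝ) * h) ≤ G z := hGmono hxkz
    have hGzk1 : G z ≤ G (a + ((k:ℝ) + 1) * h) := hGmono hzxk1
    rw [abs_le]; constructor <;> linarith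

private lemma aux_mod {G : ℝ → ℝ} (hGmono : Monotone G)
    (hG0 : ∀ z, 0 ≤ G z) (hG1 : ∀ z, G z ≤ 1)
    {a b η d δ : ℝ} (hGa : G a ≤ η) (hGb : 1 - G b ≤ η)
    (huc : ∀ x ∈ Set.Icc a b, ∀ y ∈ Set.Icc a b, |x - y| ≤ d → |G x - G y| ≤ η)
    (hdb : d ≤ b - a) (hδ : 0 < δ) (hδd : 2 * δ ≤ d) :
    ∀ z, G (z + δ) - G (z - δ) ≤ 2 * η := by
  intro z
  have hη : 0 ≤ η := le_trans (hG0 a) hGa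
  have hab : a ≤ b := by linarith
  rcases le_or_gt (z + δ) a with h1 | h1
  · have := hGmono h1
    have := hG0 (z - δ)
    linarith
  rcases le_or_gt b (z - δ) with h2 | h2
  · have := hGmono h2
    have := hG1 (z + δ)
    linarith
  rcases le_or_gt a (z - δ) with h3 | h3
  · rcases le_or_gt (z + δ) b with h4 | h4
    · have := huc (z + δ) ⟨by linarith, h4⟩ (z - δ) ⟨h3, by linarith⟩
        (by rw [show z + δ - (z - δ) = 2 * δ from by ring, abs_of_nonneg (by linarith)]; exact hδd)
      have := (abs_le.1 this).2
      linarith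
    · have hbz : b - d ≤ z - δ := by linarith
      have := huc b ⟨hab, le_refl b⟩ (z - δ) ⟨h3, h2.le⟩
        (by rw [abs_of_nonneg (by linarith)]; linarith)
      have h5 := (abs_le.1 this).2
      have := hG1 (z + δ)
      linarith
  · have h4 : z + δ ≤ a + d := by linarith
    have := huc (z + δ) ⟨h1.le, by linarith⟩ a ⟨le_refl a, by linarith⟩
      (by rw [abs_of_nonneg (by linarith)]; linarith)
    have h5 := (abs_le.1 this).2
    have := hG0 (z - δ)
    linarith

private lemma emp_sum_mono (g : ℕ → ℝ) (T : ℕ) {z1 z2 : ℝ} (hz : z1 ≤ z2) :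
    (∑ t ∈ range T, if g t ≤ z1 then (1:ℝ) else 0) / T
      ≤ (∑ t ∈ range T, if g t ≤ z2 then (1:ℝ) else 0) / T := by
  gcongr with t ht
  split_ifs with h1 h2 <;> try norm_num
  exact absurd (le_trans h1 hz) h2

private lemma emp_mono (g : ℕ → ℝ) (T : ℕ) :
    Monotone (fun z => (∑ t ∈ range T, if g t ≤ z then (1:ℝ) else 0) / T) :=
  fun _ _ hz => emp_sum_mono g T hz

private lemma emp_nonneg (g : ℕ → ℝ) (T : ℕ) (z : ℝ) :
    0 ≤ (∑ t ∈ range T, if g t ≤ z then (1:ℝ) else 0) / T := by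
  apply div_nonneg _ (Nat.cast_nonneg T)
  apply Finset.sum_nonneg
  intro t _; split_ifs <;> norm_num

private lemma emp_le_one (g : ℕ → ℝ) (T : ℕ) (z : ℝ) :
    (∑ t ∈ range T, if g t ≤ z then (1:ℝ) else 0) / T ≤ 1 := by
  rcases Nat.eq_zero_or_pos T with hT | hT
  · simp [hT]
  · rw [div_le_one (by exact_mod_cast hT)]
    calc (∑ t ∈ range T, if g t ≤ z then (1:ℝ) else 0) ≤ ∑ t ∈ range T, 1 := by
          apply Finset.sum_le_sum; intro t _; split_ifs <;> norm_num
      _ = T := by simp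

private lemma emp_sandwich_left (g ghat : ℕ → ℝ) (T : ℕ) {δ : ℝ}
    (hdev : ∀ t < T, |ghat t - g t| ≤ δ) (z : ℝ) :
    (∑ t ∈ range T, if g t ≤ z - δ then (1:ℝ) else 0) / T
      ≤ (∑ t ∈ range T, if ghat t ≤ z then (1:ℝ) else 0) / T := by
  gcongr with t ht
  split_ifs with h1 h2 <;> try norm_num
  have := (abs_le.1 (hdev t (mem_range.1 ht))).2
  exact absurd (by linarith : ghat t ≤ z) h2

private lemma emp_sandwich_right (g ghat : ℕ → ℝ) (T : ℕ) {δ : ℝ}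
    (hdev : ∀ t < T, |ghat t - g t| ≤ δ) (z : ℝ) :
    (∑ t ∈ range T, if ghat t ≤ z then (1:ℝ) else 0) / T
      ≤ (∑ t ∈ range T, if g t ≤ z + δ then (1:ℝ) else 0) / T := by
  gcongr with t ht
  split_ifs with h1 h2 <;> try norm_num
  have := (abs_le.1 (hdev t (mem_range.1 ht))).1
  exact absurd (by linarith : g t ≤ z + δ) h2

private lemma aux_lln {Ω : Type*} [MeasurableSpace Ω] (ℙ : Measure Ω) [IsProbabilityMeasure ℙ]
    (ζ : ℕ → Ω → ℝ) (hmeas : ∀ t, Measurable (ζ t))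
    (hindep : ProbabilityTheory.iIndepFun ζ ℙ)
    (z : ℝ) (hident : ∀ t, ℙ {ω | ζ t ω ≤ z} = ℙ {ω | ζ 0 ω ≤ z})
    {c : ℝ} (hc : 0 < c) :
    Tendsto (fun T => ℙ {ω | c <
        |(∑ t ∈ range T, if ζ t ω ≤ z then (1:ℝ) else 0) / T - (ℙ {ω | ζ 0 ω ≤ z}).toReal|})
      atTop (nhds 0) := by
  classical
  set p : ℝ := (ℙ {ω | ζ 0 ω ≤ z}).toReal with hp_def
  set X : ℕ → Ω → ℝ := fun t ω => if ζ t ω ≤ z then (1:ℝ) else 0 with hX_def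
  have hsetmeas : ∀ t, MeasurableSet {ω | ζ t ω ≤ z} := fun t =>
    (hmeas t) measurableSet_Iic
  have hXmeas : ∀ t, Measurable (X t) := fun t =>
    Measurable.ite (hsetmeas t) measurable_const measurable_const
  have hXmem : ∀ t, MemLp (X t) 2 ℙ := by
    intro t
    apply MemLp.of_bound (hXmeas t).aestronglyMeasurable 1
    filter_upwards with ω
    simp only [X, Real.norm_eq_abs]
    split_ifs <;> norm_num
  have hXind : ∀ t, X t = Set.indicator {ω | ζ t ω ≤ z} (fun _ => (1:ℝ)) := by
    intro t; funext ω
    simp [X, Set.indicator_apply]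
  have hEX : ∀ t, ∫ ω, X t ω ∂ℙ = p := by
    intro t
    rw [hXind t]
    rw [integral_indicator_const (1:ℝ) (hsetmeas t)]
    show (ℙ {ω | ζ t ω ≤ z}).toReal • (1:ℝ) = p
    rw [hident t]
    simp [p]
  have hp0 : 0 ≤ p := ENNReal.toReal_nonneg
  have hp1 : p ≤ 1 := by
    have h := prob_le_one (μ := ℙ) (s := {ω | ζ 0 ω ≤ z})
    calc p ≤ (1 : ENNReal).toReal := ENNReal.toReal_mono ENNReal.one_ne_top h
      _ = 1 := by simp
  have hXsq : ∀ t, X t ^ 2 = X t := by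
    intro t; funext ω; simp only [Pi.pow_apply, X]; split_ifs <;> norm_num
  have hvar : ∀ t, ProbabilityTheory.variance (X t) ℙ ≤ 1 := by
    intro t
    rw [ProbabilityTheory.variance_eq_sub (hXmem t)]
    rw [hXsq t, hEX t]
    nlinarith
  have hpair : ∀ i ∈ (⊤ : Set ℕ), ∀ j ∈ (⊤ : Set ℕ), i ≠ j →
      ProbabilityTheory.IndepFun (X i) (X j) ℙ := by
    intro i _ j _ hij
    have hφ : Measurable (fun x : ℝ => if x ≤ z then (1:ℝ) else 0) :=
      Measurable.ite measurableSet_Iic measurable_const measurable_const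
    exact (hindep.indepFun hij).comp hφ hφ
  -- per T facts
  have key : ∀ T : ℕ, 1 ≤ T →
      ℙ {ω | c < |(∑ t ∈ range T, X t ω) / T - p|}
        ≤ ENNReal.ofReal (1 / (c ^ 2 * T)) := by
    intro T hT
    have hTpos : (0:ℝ) < T := by exact_mod_cast hT
    have hSmem : MemLp (∑ t ∈ range T, X t) 2 ℙ :=
      memLp_finsetSum' _ fun t _ => hXmem t
    have hES : ∫ ω, (∑ t ∈ range T, X t) ω ∂ℙ = T * p := by
      have : ∫ ω, (∑ t ∈ range T, X t) ω ∂ℙ = ∑ t ∈ range T, ∫ ω, X t ω ∂ℙ := by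
        simp only [Finset.sum_apply]
        exact integral_finset_sum _ fun t _ => (hXmem t).integrable one_le_two
      rw [this]
      simp [hEX]
    have hVS : ProbabilityTheory.variance (∑ t ∈ range T, X t) ℙ ≤ T := by
      rw [ProbabilityTheory.IndepFun.variance_sum (fun t _ => hXmem t)
        (fun i _ j _ hij => hpair i trivial j trivial hij)]
      calc ∑ t ∈ range T, ProbabilityTheory.variance (X t) ℙ
          ≤ ∑ t ∈ range T, 1 := Finset.sum_le_sum fun t _ => hvar t
        _ = T := by simp
    have hcT : 0 < c * T := by positivity
    have hcheb := ProbabilityTheory.meas_ge_le_variance_div_sq (μ := ℙ) hSmem hcT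
    have hsub : {ω | c < |(∑ t ∈ range T, X t ω) / T - p|}
        ⊆ {ω | c * T ≤ |(∑ t ∈ range T, X t) ω - ∫ x, (∑ t ∈ range T, X t) x ∂ℙ|} := by
      intro ω hω
      simp only [Set.mem_setOf_eq] at hω ⊢
      rw [hES]
      have h1 : |(∑ t ∈ range T, X t ω) / T - p| * T
          = |(∑ t ∈ range T, X t) ω - T * p| := by
        rw [← abs_of_pos hTpos, ← abs_mul]
        congr 1
        field_simp
        rw [abs_of_pos hTpos, Finset.sum_apply]; ring
      nlinarith [hω, hTpos]
    calc ℙ {ω | c < |(∑ t ∈ range T, X t ω) / T - p|}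
        ≤ ℙ {ω | c * T ≤ |(∑ t ∈ range T, X t) ω - ∫ x, (∑ t ∈ range T, X t) x ∂ℙ|} :=
          measure_mono hsub
      _ ≤ ENNReal.ofReal (ProbabilityTheory.variance (∑ t ∈ range T, X t) ℙ / (c * T) ^ 2) :=
          hcheb
      _ ≤ ENNReal.ofReal (1 / (c ^ 2 * T)) := by
          apply ENNReal.ofReal_le_ofReal
          rw [div_le_div_iff₀ (by positivity) (by positivity)]
          nlinarith [hVS]
  -- conclude by squeeze
  have hlim : Tendsto (fun T : ℕ => ENNReal.ofReal (1 / (c ^ 2 * T))) atTop (nhds 0) := by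
    have h1 : Tendsto (fun T : ℕ => 1 / (c ^ 2 * (T:ℝ))) atTop (nhds 0) := by
      have := tendsto_one_div_atTop_nhds_zero_nat (𝕜 := ℝ)
      have h2 := this.const_mul (1 / c ^ 2)
      simp only [mul_zero] at h2
      convert h2 using 2 with T
      field_simp
    have := (ENNReal.tendsto_ofReal h1)
    simpa using this
  apply tendsto_of_tendsto_of_tendsto_of_le_of_le' tendsto_const_nhds hlim
  · filter_upwards with T using zero_le
  · filter_upwards [eventually_ge_atTop 1] with T hT using key T hT

/-- If `(ζ_t)` are i.i.d. with continuous cdf `F` and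
`max_{t<T} |ζ̂_t − ζ_t| → 0` in probability, then the empirical cdfs `F̂` (of `ζ`)
and `F̃` (of `ζ̂`) satisfy `sup_z |F̂(z) − F̃(z)| → 0` in probability as `T → ∞`. -/
theorem stmt_12
    {Ω : Type*} [MeasurableSpace Ω] (ℙ : Measure Ω) [IsProbabilityMeasure ℙ]
    (F : ℝ → ℝ) (hFcont : Continuous F)
    (ζ : ℕ → Ω → ℝ) (hmeas : ∀ t, Measurable (ζ t))
    -- i.i.d. with cdf F
    (hindep : ProbabilityTheory.iIndepFun ζ ℙ)
    (hcdf : ∀ t (z : ℝ), ℙ {ω | ζ t ω ≤ z} = ENNReal.ofReal (F z))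
    -- triangular array of approximations, uniformly consistent in probability
    (ζhat : ℕ → ℕ → Ω → ℝ)
    (hconsist : ∀ ε : ℝ, 0 < ε →
      Tendsto (fun T => ℙ {ω | ∃ t < T, ε < |ζhat T t ω - ζ t ω|}) atTop (nhds 0))
    -- the empirical cdfs
    (Fhat Ftilde : ℕ → Ω → ℝ → ℝ)
    (hFhat : ∀ T ω z, Fhat T ω z =
      (∑ t ∈ range T, if ζ t ω ≤ z then (1:ℝ) else 0) / T)
    (hFtilde : ∀ T ω z, Ftilde T ω z =
      (∑ t ∈ range T, if ζhat T t ω ≤ z then (1:ℝ) else 0) / T) :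
    ∀ ε : ℝ, 0 < ε →
      Tendsto (fun T => ℙ {ω | ε < ⨆ z : ℝ, |Fhat T ω z - Ftilde T ω z|})
        atTop (nhds 0) := by
  classical
  intro ε hε
  set η : ℝ := ε / 8 with hη_def
  set c : ℝ := ε / 4 with hc_def
  have hηpos : 0 < η := by positivity
  have hcpos : 0 < c := by positivity
  -- the true cdf (as a [0,1]-valued function)
  set G : ℝ → ℝ := fun z => (ℙ {ω | ζ 0 ω ≤ z}).toReal with hG_def
  have hGmax : ∀ z, G z = max (F z) 0 := by
    intro z
    rw [hG_def]
    simp only [hcdf 0 z, ENNReal.toReal_ofReal']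
  have hGcont : Continuous G := by
    have : G = fun z => max (F z) 0 := funext hGmax
    rw [this]
    exact hFcont.max continuous_const
  have hGmono : Monotone G := by
    intro z1 z2 hz
    exact ENNReal.toReal_mono (measure_ne_top _ _)
      (measure_mono fun ω hω => le_trans hω hz)
  have hG0 : ∀ z, 0 ≤ G z := fun z => ENNReal.toReal_nonneg
  have hG1 : ∀ z, G z ≤ 1 := by
    intro z
    calc G z ≤ (1 : ENNReal).toReal :=
        ENNReal.toReal_mono ENNReal.one_ne_top prob_le_one
      _ = 1 := by simp
  -- tail at -∞
  have htail_a : ∃ a : ℝ, G a ≤ η := by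
    have hanti : Antitone (fun n : ℕ => ζ 0 ⁻¹' Set.Iic (-(n:ℝ))) := by
      intro m n hmn ω hω
      simp only [Set.mem_preimage, Set.mem_Iic] at hω ⊢
      have : -(n:ℝ) ≤ -(m:ℝ) := by exact_mod_cast neg_le_neg (Nat.cast_le.2 hmn)
      linarith
    have hiInter : (⋂ n : ℕ, ζ 0 ⁻¹' Set.Iic (-(n:ℝ))) = ∅ := by
      ext ω
      simp only [Set.mem_iInter, Set.mem_preimage, Set.mem_Iic, Set.mem_empty_iff_false, iff_false,
        not_forall]
      obtain ⟨n, hn⟩ := exists_nat_gt (-(ζ 0 ω))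
      exact ⟨n, by push_neg; linarith⟩
    have h0 := tendsto_measure_iInter_atTop (μ := ℙ)
      (fun n => ((hmeas 0) measurableSet_Iic).nullMeasurableSet) hanti
      ⟨0, measure_ne_top _ _⟩
    rw [hiInter] at h0
    simp only [measure_empty] at h0
    have h1 : Tendsto (fun n : ℕ => G (-(n:ℝ))) atTop (nhds 0) := by
      have := (ENNReal.tendsto_toReal (by simp : (0:ENNReal) ≠ ⊤)).comp h0
      exact this
    obtain ⟨n, hn⟩ := (h1.eventually (gt_mem_nhds hηpos)).exists
    exact ⟨-(n:ℝ), hn.le⟩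
  -- tail at +∞
  have htail_b : ∃ b : ℝ, 1 - G b ≤ η := by
    have hmono : Monotone (fun n : ℕ => ζ 0 ⁻¹' Set.Iic ((n:ℝ))) := by
      intro m n hmn ω hω
      simp only [Set.mem_preimage, Set.mem_Iic] at hω ⊢
      have : (m:ℝ) ≤ (n:ℝ) := by exact_mod_cast hmn
      linarith
    have hiUnion : (⋃ n : ℕ, ζ 0 ⁻¹' Set.Iic ((n:ℝ))) = Set.univ := by
      ext ω
      simp only [Set.mem_iUnion, Set.mem_preimage, Set.mem_Iic, Set.mem_univ, iff_true]
      obtain ⟨n, hn⟩ := exists_nat_gt (ζ 0 ω)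
      exact ⟨n, hn.le⟩
    have h0 := tendsto_measure_iUnion_atTop (μ := ℙ) hmono
    rw [hiUnion] at h0
    simp only [measure_univ] at h0
    have h1 : Tendsto (fun n : ℕ => G ((n:ℝ))) atTop (nhds 1) := by
      have := (ENNReal.tendsto_toReal ENNReal.one_ne_top).comp h0
      exact this
    have h2 : Tendsto (fun n : ℕ => 1 - G ((n:ℝ))) atTop (nhds 0) := by
      have := h1.const_sub 1
      simpa using this
    obtain ⟨n, hn⟩ := (h2.eventually (gt_mem_nhds hηpos)).exists
    exact ⟨(n:ℝ), hn.le⟩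
  obtain ⟨a, hGa⟩ := htail_a
  obtain ⟨b0, hGb0⟩ := htail_b
  set b : ℝ := max b0 (a + 1) with hb_def
  have hab : a < b := lt_of_lt_of_le (by linarith) (le_max_right _ _)
  have hGb : 1 - G b ≤ η := by
    have := hGmono (le_max_left b0 (a + 1))
    linarith
  -- uniform continuity on [a, b]
  have hucG : UniformContinuousOn G (Set.Icc a b) :=
    (isCompact_Icc (a := a) (b := b)).uniformContinuousOn_of_continuous hGcont.continuousOn
  obtain ⟨d0, hd0pos, hd0⟩ := (Metric.uniformContinuousOn_iff_le.1 hucG) η hηpos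
  set d : ℝ := min d0 (b - a) with hd_def
  have hdpos : 0 < d := lt_min hd0pos (by linarith)
  have huc : ∀ x ∈ Set.Icc a b, ∀ y ∈ Set.Icc a b, |x - y| ≤ d → |G x - G y| ≤ η := by
    intro x hx y hy hxy
    have := hd0 x hx y hy (by rw [Real.dist_eq]; exact le_trans hxy (min_le_left _ _))
    rwa [Real.dist_eq] at this
  have hdb : d ≤ b - a := min_le_right _ _
  set δ : ℝ := d / 2 with hδ_def
  have hδpos : 0 < δ := by positivity
  have hδd : 2 * δ ≤ d := by rw [hδ_def]; linarith
  -- the grid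
  obtain ⟨N, hNgt⟩ := exists_nat_gt ((b - a) / d)
  have hNpos : 0 < N := by
    have h1 : (0:ℝ) < (b - a) / d := div_pos (by linarith) hdpos
    have : (0:ℝ) < (N:ℝ) := lt_trans h1 hNgt
    exact_mod_cast this
  have hNR : (0:ℝ) < (N:ℝ) := by exact_mod_cast hNpos
  have hh : (b - a) / N ≤ d := by
    rw [div_le_iff₀ hNR]
    have := (div_lt_iff₀ hdpos).1 hNgt
    nlinarith
  set x : ℕ → ℝ := fun k => a + k * ((b - a) / N) with hx_def
  -- bad events
  set A : ℕ → Set Ω := fun T => {ω | ∃ t < T, δ < |ζhat T t ω - ζ t ω|} with hA_def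
  set B : ℕ → ℕ → Set Ω := fun T k => {ω | c < |Fhat T ω (x k) - G (x k)|} with hB_def
  -- the key inclusion
  have hsub : ∀ T, {ω | ε < ⨆ z : ℝ, |Fhat T ω z - Ftilde T ω z|}
      ⊆ A T ∪ ⋃ k ∈ range (N + 1), B T k := by
    intro T ω hω
    by_contra hnot
    simp only [Set.mem_union, Set.mem_iUnion, not_or, not_exists] at hnot
    obtain ⟨hnA, hnB⟩ := hnot
    have hdev : ∀ t < T, |ζhat T t ω - ζ t ω| ≤ δ := by
      intro t ht
      by_contra hcon
      exact hnA ⟨t, ht, by push_neg at hcon; exact hcon⟩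
    have hgrid : ∀ k ≤ N, |Fhat T ω (x k) - G (x k)| ≤ c := by
      intro k hk
      by_contra hcon
      push_neg at hcon
      exact hnB k (Finset.mem_range.2 (by omega)) hcon
    -- identify empirical cdfs
    have hHeq : Fhat T ω = fun z => (∑ t ∈ range T, if ζ t ω ≤ z then (1:ℝ) else 0) / T :=
      funext (hFhat T ω)
    have hHteq : Ftilde T ω = fun z => (∑ t ∈ range T, if ζhat T t ω ≤ z then (1:ℝ) else 0) / T :=
      funext (hFtilde T ω)
    have hHmono : Monotone (Fhat T ω) := by rw [hHeq]; exact emp_mono _ T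
    have hH0 : ∀ z, 0 ≤ Fhat T ω z := by rw [hHeq]; exact emp_nonneg _ T
    have hH1 : ∀ z, Fhat T ω z ≤ 1 := by rw [hHeq]; exact emp_le_one _ T
    -- grid approximation
    have happrox : ∀ z, |Fhat T ω z - G z| ≤ c + η :=
      aux_grid hGmono hHmono hG0 hG1 hH0 hH1 hab hcpos.le hGa hGb huc hNpos hh hgrid
    -- modulus bound
    have hmod : ∀ z, G (z + δ) - G (z - δ) ≤ 2 * η :=
      aux_mod hGmono hG0 hG1 hGa hGb huc hdb hδpos hδd
    -- sandwich
    have hsand : ∀ z, Fhat T ω (z - δ) ≤ Ftilde T ω z ∧ Ftilde T ω z ≤ Fhat T ω (z + δ) := by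
      intro z
      rw [hHeq, hHteq]
      exact ⟨emp_sandwich_left _ _ T hdev z, emp_sandwich_right _ _ T hdev z⟩
    -- pointwise bound
    have hpt : ∀ z, |Fhat T ω z - Ftilde T ω z| ≤ ε := by
      intro z
      obtain ⟨hs1, hs2⟩ := hsand z
      have hm1 : Fhat T ω (z - δ) ≤ Fhat T ω z := hHmono (by linarith)
      have hm2 : Fhat T ω z ≤ Fhat T ω (z + δ) := hHmono (by linarith)
      have ha1 := abs_le.1 (happrox (z + δ))
      have ha2 := abs_le.1 (happrox (z - δ))
      have hmz := hmod z
      rw [abs_le]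
      simp only [hη_def, hc_def] at ha1 ha2 hmz
      exact ⟨by linarith [ha1.2, ha2.1], by linarith [ha1.2, ha2.1]⟩
    have : (⨆ z : ℝ, |Fhat T ω z - Ftilde T ω z|) ≤ ε := ciSup_le hpt
    simp only [Set.mem_setOf_eq] at hω
    linarith
  -- the LLN at each grid point
  have hB_lim : ∀ k, Tendsto (fun T => ℙ (B T k)) atTop (nhds 0) := by
    intro k
    have hident : ∀ t, ℙ {ω | ζ t ω ≤ x k} = ℙ {ω | ζ 0 ω ≤ x k} := by
      intro t; rw [hcdf t, hcdf 0]
    have hlln := aux_lln ℙ ζ hmeas hindep (x k) hident hcpos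
    have hBeq : ∀ T, B T k = {ω | c <
        |(∑ t ∈ range T, if ζ t ω ≤ x k then (1:ℝ) else 0) / T - (ℙ {ω | ζ 0 ω ≤ x k}).toReal|} := by
      intro T
      ext ω
      simp only [hB_def, Set.mem_setOf_eq, hFhat T ω (x k), hG_def]
    simpa only [← hBeq] using hlln
  -- combine
  have hbound : ∀ T, ℙ {ω | ε < ⨆ z : ℝ, |Fhat T ω z - Ftilde T ω z|}
      ≤ ℙ (A T) + ∑ k ∈ range (N + 1), ℙ (B T k) := by
    intro T
    calc ℙ {ω | ε < ⨆ z : ℝ, |Fhat T ω z - Ftilde T ω z|}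
        ≤ ℙ (A T ∪ ⋃ k ∈ range (N + 1), B T k) := measure_mono (hsub T)
      _ ≤ ℙ (A T) + ℙ (⋃ k ∈ range (N + 1), B T k) := measure_union_le _ _
      _ ≤ ℙ (A T) + ∑ k ∈ range (N + 1), ℙ (B T k) := by
          gcongr
          exact measure_biUnion_finset_le _ _
  have hA_lim : Tendsto (fun T => ℙ (A T)) atTop (nhds 0) := hconsist δ hδpos
  have hsum_lim : Tendsto (fun T => ℙ (A T) + ∑ k ∈ range (N + 1), ℙ (B T k))
      atTop (nhds 0) := by
    have h2 : Tendsto (fun T => ∑ k ∈ range (N + 1), ℙ (B T k)) atTop (nhds 0) := by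
      have := tendsto_finset_sum (range (N + 1)) (fun k _ => hB_lim k)
      simpa using this
    have := hA_lim.add h2
    simpa using this
  exact tendsto_of_tendsto_of_tendsto_of_le_of_le tendsto_const_nhds hsum_lim
    (fun T => zero_le) hbound
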